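/- Lemma (Convexity of the SCAD_L2 penalty): If a > 2, λ1 > 0 and λ2 > 1/(2(a−1)), then the function θ ↦ λ1·f_SCAD(|θ|) + λ2·θ² is strictly convex on ℝ. -/

import Mathlib

open intervalIntegral

/-- The SCAD function `f_SCAD(θ) = ∫₀^θ ( 1_{t ≤ λ1} + ((a·λ1 − t)₊/((a−1)·λ1))·1_{t > λ1} ) dt`. -/
noncomputable def fSCAD (a lam1 : ℝ) (θ : ℝ) : ℝ :=
  ∫ t in (0:ℝ)..θ,
    (if t ≤ lam1 then (1:ℝ) else 0) + (max (a * lam1 - t) 0 / ((a - 1) * lam1)) * (if lam1 < t then (1:ℝ) else 0)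

open Set

/-- Continuous version of the SCAD integrand. -/
noncomputable def scadPsi (a lam1 : ℝ) (u : ℝ) : ℝ :=
  min 1 (max (a * lam1 - u) 0 / ((a - 1) * lam1))

lemma scadPsi_cont (a lam1 : ℝ) : Continuous (scadPsi a lam1) :=
  continuous_const.min (((continuous_const.sub continuous_id).max continuous_const).div_const _)

lemma fSCAD_eq {a lam1 : ℝ} (ha : 2 < a) (hlam1 : 0 < lam1) :
    fSCAD a lam1 = fun θ => ∫ u in (0:ℝ)..θ, scadPsi a lam1 u := by
  have ha1 : (0:ℝ) < a - 1 := by linarith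
  have halam : 0 < (a - 1) * lam1 := mul_pos ha1 hlam1
  funext θ
  refine intervalIntegral.integral_congr fun u _ => ?_
  unfold scadPsi
  rcases le_or_gt u lam1 with h | h
  · rw [if_pos h, if_neg (not_lt.mpr h), mul_zero, add_zero,
      max_eq_left (show (0:ℝ) ≤ a * lam1 - u by nlinarith)]
    exact (min_eq_left (by rw [one_le_div halam]; nlinarith)).symm
  · rw [if_neg (not_le.mpr h), if_pos h, mul_one, zero_add]
    exact (min_eq_right (by
      rw [div_le_one halam]
      exact max_le (by nlinarith) halam.le)).symm

lemma fSCAD_hasDerivAt {a lam1 : ℝ} (ha : 2 < a) (hlam1 : 0 < lam1) (θ : ℝ) :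
    HasDerivAt (fSCAD a lam1) (scadPsi a lam1 θ) θ := by
  rw [fSCAD_eq ha hlam1]
  exact ((scadPsi_cont a lam1).integral_hasStrictDerivAt 0 θ).hasDerivAt

/-- The derivative of `lam1 * fSCAD + θ²/(2(a-1))`. -/
noncomputable def scadPhi (a lam1 : ℝ) (θ : ℝ) : ℝ :=
  min (lam1 + θ / (a - 1)) (max (a * lam1) θ / (a - 1))

lemma scadPhi_eq {a lam1 : ℝ} (ha : 2 < a) (hlam1 : 0 < lam1) (θ : ℝ) :
    lam1 * scadPsi a lam1 θ + 1 / (2 * (a - 1)) * (2 * θ) = scadPhi a lam1 θ := by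
  have ha1 : (0:ℝ) < a - 1 := by linarith
  have halam : 0 < (a - 1) * lam1 := mul_pos ha1 hlam1
  have hcancel : θ / (a - 1) * (a - 1) = θ := div_mul_cancel₀ θ ha1.ne'
  unfold scadPsi scadPhi
  rcases le_or_gt θ lam1 with h | h
  · rw [max_eq_left (show (0:ℝ) ≤ a * lam1 - θ by nlinarith),
      min_eq_left (by rw [one_le_div halam]; nlinarith),
      max_eq_left (show θ ≤ a * lam1 by nlinarith),
      min_eq_left (show lam1 + θ / (a - 1) ≤ a * lam1 / (a - 1) by
        rw [le_div_iff₀ ha1]; nlinarith)]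
    field_simp
  · rcases le_or_gt θ (a * lam1) with h2 | h2
    · rw [max_eq_left (show (0:ℝ) ≤ a * lam1 - θ by linarith),
        min_eq_right (show (a * lam1 - θ) / ((a - 1) * lam1) ≤ 1 by rw [div_le_one halam]; nlinarith),
        max_eq_left h2,
        min_eq_right (show a * lam1 / (a - 1) ≤ lam1 + θ / (a - 1) by
          rw [div_le_iff₀ ha1]; nlinarith)]
      field_simp
      ring
    · rw [max_eq_right (show a * lam1 - θ ≤ 0 by linarith), zero_div,
        min_eq_right zero_le_one, max_eq_right h2.le,
        min_eq_right (le_add_of_nonneg_left hlam1.le)]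
      field_simp
      ring

lemma scadPhi_mono {a lam1 : ℝ} (ha : 2 < a) : Monotone (scadPhi a lam1) := by
  have ha1 : (0:ℝ) ≤ a - 1 := by linarith
  exact Monotone.min
    (monotone_const.add (monotone_id.div_const ha1))
    ((monotone_const.max monotone_id).div_const ha1)

lemma scadPhi_nonneg {a lam1 : ℝ} (ha : 2 < a) (hlam1 : 0 < lam1) {θ : ℝ} (hθ : 0 ≤ θ) :
    0 ≤ scadPhi a lam1 θ := by
  have ha1 : (0:ℝ) ≤ a - 1 := by linarith
  exact le_min (add_nonneg hlam1.le (div_nonneg hθ ha1))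
    (div_nonneg (le_max_of_le_left (by nlinarith)) ha1)

/-- Convexity of the SCAD_L2 penalty: if `a > 2`, `λ1 > 0` and `λ2 > 1/(2(a−1))`, then
`θ ↦ λ1·f_SCAD(|θ|) + λ2·θ²` is strictly convex on ℝ. -/
theorem scad_l2_strictly_convex
    (a lam1 lam2 : ℝ) (ha : 2 < a) (hlam1 : 0 < lam1)
    (hlam2 : 1 / (2 * (a - 1)) < lam2) :
    ∀ x y : ℝ, x ≠ y → ∀ t : ℝ, 0 < t → t < 1 →
      lam1 * fSCAD a lam1 |t * x + (1 - t) * y| + lam2 * (t * x + (1 - t) * y) ^ 2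
        < t * (lam1 * fSCAD a lam1 |x| + lam2 * x ^ 2)
          + (1 - t) * (lam1 * fSCAD a lam1 |y| + lam2 * y ^ 2) := by
  have ha1 : (0:ℝ) < a - 1 := by linarith
  set cc : ℝ := 1 / (2 * (a - 1)) with hcc
  set G : ℝ → ℝ := fun θ => lam1 * fSCAD a lam1 θ + cc * θ ^ 2 with hGdef
  -- derivative of G
  have hGd : ∀ θ, HasDerivAt G (scadPhi a lam1 θ) θ := by
    intro θ
    have h1 : HasDerivAt G (lam1 * scadPsi a lam1 θ + cc * (2 * θ)) θ := by
      have h0 := ((fSCAD_hasDerivAt ha hlam1 θ).const_mul lam1).add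
        ((hasDerivAt_pow 2 θ).const_mul cc)
      rw [hGdef]
      exact h0.congr_deriv (by norm_num)
    exact (scadPhi_eq ha hlam1 θ) ▸ h1
  have hGdiff : Differentiable ℝ G := fun θ => (hGd θ).differentiableAt
  have hGderiv : deriv G = scadPhi a lam1 := funext fun θ => (hGd θ).deriv
  have hGconv : ConvexOn ℝ univ G :=
    Monotone.convexOn_univ_of_deriv hGdiff (hGderiv ▸ scadPhi_mono ha)
  have hGmono : MonotoneOn G (Ici 0) := by
    apply monotoneOn_of_deriv_nonneg (convex_Ici 0) hGdiff.continuous.continuousOn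
      hGdiff.differentiableOn
    intro x hx
    rw [interior_Ici] at hx
    rw [hGderiv]
    exact scadPhi_nonneg ha hlam1 (le_of_lt hx)
  -- compose with abs
  have himg : (fun θ : ℝ => |θ|) '' univ = Ici 0 := by
    ext u
    simp only [image_univ, mem_range, mem_Ici]
    constructor
    · rintro ⟨v, rfl⟩; exact abs_nonneg v
    · intro hu; exact ⟨u, abs_of_nonneg hu⟩
  have habs : ConvexOn ℝ univ (fun θ : ℝ => |θ|) := by
    exact (convexOn_univ_norm : ConvexOn ℝ univ (norm : ℝ → ℝ))
  have hcomp : ConvexOn ℝ univ (G ∘ fun θ : ℝ => |θ|) :=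
    ConvexOn.comp (by rw [himg]; exact hGconv.subset (subset_univ _) (convex_Ici 0)) habs
      (by rw [himg]; exact hGmono)
  -- strictly convex quadratic part
  have hlc : 0 < lam2 - cc := by rw [hcc]; linarith
  have hq : StrictConvexOn ℝ univ fun θ : ℝ => (lam2 - cc) * θ ^ 2 := by
    apply StrictMono.strictConvexOn_univ_of_deriv (by continuity)
    have hd : ∀ θ : ℝ, HasDerivAt (fun θ : ℝ => (lam2 - cc) * θ ^ 2) ((lam2 - cc) * (2 * θ)) θ := by
      intro θ
      have h0 := (hasDerivAt_pow 2 θ).const_mul (lam2 - cc)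
      exact h0.congr_deriv (by norm_num)
    have hde : deriv (fun θ : ℝ => (lam2 - cc) * θ ^ 2) = fun θ => (lam2 - cc) * (2 * θ) :=
      funext fun θ => (hd θ).deriv
    rw [hde]
    intro u v huv
    dsimp only
    nlinarith
  have hF : StrictConvexOn ℝ univ ((G ∘ fun θ : ℝ => |θ|) + fun θ : ℝ => (lam2 - cc) * θ ^ 2) :=
    hcomp.add_strictConvexOn hq
  have hFeq : ∀ θ : ℝ, ((G ∘ fun θ : ℝ => |θ|) + fun θ : ℝ => (lam2 - cc) * θ ^ 2) θ
      = lam1 * fSCAD a lam1 |θ| + lam2 * θ ^ 2 := by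
    intro θ
    simp only [Pi.add_apply, Function.comp_apply, hGdef]
    rw [sq_abs]
    ring
  intro x y hxy t ht h1t
  have h2 := hF.2 (mem_univ x) (mem_univ y) hxy ht (by linarith : (0:ℝ) < 1 - t) (by ring)
  simp only [smul_eq_mul] at h2
  rw [hFeq, hFeq, hFeq] at h2
  exact h2
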